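/- Let P be a Fractran program, d the lcm of its denominators, and S_P : ℕ → Prop the 'produces at position n' predicate defined corecursively following the stream specification: S_P(n) holds iff, with m = φ(n+1), either a'_m is undefined and (⌊n/d⌋ = 0 or S_P(n − d)), or a'_m is defined and S_P(⌊n/d⌋·a'_m + o_m − 1). Then S_P(n) holds for all n ∈ ℕ if and only if P halts on every positive integer. -/

import Mathlib

/-- One step of a Fractran program `P` on input `n`: multiply `n` by the first
fraction in the list whose product with `n` is an integer; `none` if no such fraction. -/
def fracStep (P : List ℚ) (n : ℕ) : Option ℕ :=
  ((P.map (fun q => (n : ℚ) * q)).find? (fun x => x.den == 1)).map (fun x => x.num.toNat)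

/-- `i`-fold iteration of the partial Fractran step function. -/
def fracIter (P : List ℚ) : ℕ → ℕ → Option ℕ
  | 0, n => some n
  | i + 1, n => (fracStep P n).bind (fracIter P i)

/-- `d`: the least common multiple of the denominators of the program. -/
def fracD (P : List ℚ) : ℕ := (P.map (fun q => q.den)).foldr Nat.lcm 1

/-- `a'_n = a_i · (d / b_i)` for the first fraction `a_i/b_i` of `P` such that
`n · a_i/b_i` is an integer; `none` if no such fraction exists. -/
def fracA' (P : List ℚ) (n : ℕ) : Option ℕ :=
  (P.find? (fun q => ((n : ℚ) * q).den == 1)).map (fun q => q.num.toNat * (fracD P / q.den))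

/-- `o_n = n · a_i/b_i` for the first fraction `a_i/b_i` of `P` such that
`n · a_i/b_i` is an integer; `none` if no such fraction exists. -/
def fracO (P : List ℚ) (n : ℕ) : Option ℕ :=
  (P.find? (fun q => ((n : ℚ) * q).den == 1)).map (fun q => ((n : ℚ) * q).num.toNat)

/-- `φ(n)`: the unique element of `{1, …, d}` congruent to `n` modulo `d`. -/
def phi (d n : ℕ) : ℕ := (n - 1) % d + 1

/-- The productivity predicate of the stream specification induced by `P`:
`S_P(n)` is the least predicate closed under the clauses of the position-wise
unfolding of the specification (with `m = φ(n+1)`). -/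
inductive SP (P : List ℚ) : ℕ → Prop where
  | base (n : ℕ) (hu : fracA' P (phi (fracD P) (n + 1)) = none)
      (h0 : n / fracD P = 0) : SP P n
  | stepUndef (n : ℕ) (hu : fracA' P (phi (fracD P) (n + 1)) = none)
      (h0 : 0 < n / fracD P) (ih : SP P (n - fracD P)) : SP P n
  | stepDef (n a o : ℕ) (ha : fracA' P (phi (fracD P) (n + 1)) = some a)
      (ho : fracO P (phi (fracD P) (n + 1)) = some o)
      (ih : SP P (n / fracD P * a + o - 1)) : SP P n

lemma fracD_pos (P : List ℚ) : 0 < fracD P := by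
  induction P with
  | nil => simp [fracD]
  | cons q P ih => exact Nat.lcm_pos q.pos ih

lemma den_dvd_fracD (P : List ℚ) {q : ℚ} (h : q ∈ P) : q.den ∣ fracD P := by
  induction P with
  | nil => simp at h
  | cons p P ih =>
    rcases List.mem_cons.1 h with rfl | h
    · exact Nat.dvd_lcm_left _ _
    · exact (ih h).trans (Nat.dvd_lcm_right _ _)

lemma rat_mul_den (q : ℚ) : q * (q.den : ℚ) = (q.num : ℚ) := by
  have h := Rat.num_div_den q
  have hden : (q.den : ℚ) ≠ 0 := by
    exact_mod_cast q.den_pos.ne'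
  nth_rewrite 1 [← h]
  field_simp

lemma den_mul_eq_one_iff (q : ℚ) (k : ℕ) : ((k : ℚ) * q).den = 1 ↔ q.den ∣ k := by
  constructor
  · intro h
    have h2 : ((k : ℚ) * q) = (((k : ℚ) * q).num : ℚ) := ((Rat.den_eq_one_iff _).1 h).symm
    have h3 : (k : ℤ) * q.num = ((k : ℚ) * q).num * q.den := by
      have : (k : ℚ) * (q.num : ℚ) = (((k : ℚ) * q).num : ℚ) * (q.den : ℚ) := by
        rw [← rat_mul_den q, ← mul_assoc, ← h2]
      exact_mod_cast this
    have hdvd : (q.den : ℤ) ∣ (k : ℤ) * q.num := ⟨_, h3.trans (mul_comm _ _)⟩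
    have hco : IsCoprime (q.den : ℤ) q.num := by
      rw [Int.isCoprime_iff_gcd_eq_one]
      exact Nat.Coprime.symm q.reduced
    have := hco.dvd_of_dvd_mul_right hdvd
    exact_mod_cast this
  · rintro ⟨c, rfl⟩
    have : ((q.den * c : ℕ) : ℚ) * q = (((c : ℤ) * q.num : ℤ) : ℚ) := by
      push_cast
      rw [mul_comm (q.den : ℚ) (c : ℚ), mul_assoc, mul_comm (q.den : ℚ) q, rat_mul_den]
    rw [this, Rat.den_intCast]

lemma rat_mul_eq (q : ℚ) (hq : 0 < q) (k : ℕ) (h : q.den ∣ k) :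
    (k : ℚ) * q = ((k / q.den * q.num.toNat : ℕ) : ℚ) := by
  obtain ⟨c, rfl⟩ := h
  have hnum : (0 : ℤ) < q.num := Rat.num_pos.2 hq
  have htn : ((q.num.toNat : ℕ) : ℚ) = (q.num : ℚ) := by
    exact_mod_cast congrArg (fun z : ℤ => (z : ℚ)) (Int.toNat_of_nonneg hnum.le)
  push_cast [Nat.mul_div_cancel_left c q.den_pos]
  rw [htn, mul_comm (q.den : ℚ) (c : ℚ), mul_assoc, mul_comm (q.den : ℚ) q, rat_mul_den]
lemma find?_congr {l : List ℚ} {p p' : ℚ → Bool} (h : ∀ x ∈ l, p x = p' x) :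
    l.find? p = l.find? p' := by
  induction l with
  | nil => rfl
  | cons a l ih =>
    have ha := h a List.mem_cons_self
    rw [List.find?_cons, List.find?_cons, ha]
    cases p' a
    · exact ih (fun x hx => h x (List.mem_cons_of_mem a hx))
    · rfl

lemma phi_decomp (d n : ℕ) : n + 1 = n / d * d + phi d (n + 1) := by
  simp only [phi, Nat.add_sub_cancel]
  conv_rhs => rw [← Nat.add_assoc, Nat.div_add_mod' n d]

lemma phi_pos (d n : ℕ) : 1 ≤ phi d n := Nat.le_add_left 1 _

lemma dvd_phi_iff {b d : ℕ} (hb : b ∣ d) (n : ℕ) :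
    b ∣ phi d (n + 1) ↔ b ∣ (n + 1) := by
  obtain ⟨e, he⟩ := hb
  have hmod : (n + 1) % b = phi d (n + 1) % b := by
    have h2 : n / d * d + phi d (n + 1) = phi d (n + 1) + n / d * e * b := by
      rw [he]; ring
    conv_lhs => rw [phi_decomp d n]
    rw [h2, Nat.add_mul_mod_self_right]
  rw [Nat.dvd_iff_mod_eq_zero, Nat.dvd_iff_mod_eq_zero, hmod]

lemma find?_phi (P : List ℚ) (n : ℕ) :
    P.find? (fun q => (((n + 1 : ℕ) : ℚ) * q).den == 1) =
      P.find? (fun q => (((phi (fracD P) (n + 1) : ℕ) : ℚ) * q).den == 1) := by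
  apply find?_congr
  intro q hq
  have hd := den_dvd_fracD P hq
  rw [Bool.eq_iff_iff]
  simp only [beq_iff_eq]
  rw [den_mul_eq_one_iff, den_mul_eq_one_iff, dvd_phi_iff hd]

lemma step_none_iff (P : List ℚ) (n : ℕ) :
    fracStep P (n + 1) = none ↔ fracA' P (phi (fracD P) (n + 1)) = none := by
  rw [fracStep, fracA', List.find?_map]
  simp only [Option.map_eq_none_iff]
  rw [show ((fun (x : ℚ) => x.den == 1) ∘ fun q => ((n + 1 : ℕ) : ℚ) * q)
      = fun q => (((n + 1 : ℕ) : ℚ) * q).den == 1 from rfl, find?_phi]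

lemma step_some (P : List ℚ) (hpos : ∀ q ∈ P, 0 < q) (n a o : ℕ)
    (ha : fracA' P (phi (fracD P) (n + 1)) = some a)
    (ho : fracO P (phi (fracD P) (n + 1)) = some o) :
    fracStep P (n + 1) = some (n / fracD P * a + o) ∧ 1 ≤ o := by
  set d := fracD P with hd
  set m := phi d (n + 1) with hm
  rw [fracA'] at ha
  rw [fracO] at ho
  obtain ⟨q, hfind, hq⟩ := Option.map_eq_some_iff.1 ha
  obtain ⟨q', hfind', hq'⟩ := Option.map_eq_some_iff.1 ho
  rw [hfind] at hfind'
  obtain rfl : q = q' := by injection hfind'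
  have hmem : q ∈ P := List.mem_of_find?_eq_some hfind
  have hqpos : 0 < q := hpos q hmem
  have hbm : q.den ∣ m := (den_mul_eq_one_iff q m).1 (by simpa using List.find?_some hfind)
  have hbd : q.den ∣ d := den_dvd_fracD P hmem
  have hbn : q.den ∣ (n + 1) := (dvd_phi_iff hbd n).1 hbm
  have hnum1 : 1 ≤ q.num.toNat := by
    have := Rat.num_pos.2 hqpos
    omega
  -- value of o
  have hoval : o = m / q.den * q.num.toNat := by
    rw [← hq', rat_mul_eq q hqpos m hbm]
    rw [Rat.num_natCast, Int.toNat_natCast]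
  have hopos : 1 ≤ o := by
    rw [hoval]
    have h1 : 1 ≤ m / q.den := Nat.one_le_div_iff q.den_pos |>.2 (Nat.le_of_dvd (phi_pos d _) hbm)
    exact Nat.one_le_iff_ne_zero.2 (by positivity)
  refine ⟨?_, hopos⟩
  -- compute fracStep
  rw [fracStep, List.find?_map,
    show ((fun (x : ℚ) => x.den == 1) ∘ fun q => ((n + 1 : ℕ) : ℚ) * q)
      = fun q => (((n + 1 : ℕ) : ℚ) * q).den == 1 from rfl, find?_phi, ← hm, hfind]
  simp only [Option.map_some]
  congr 1
  rw [rat_mul_eq q hqpos (n + 1) hbn]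
  simp only [Rat.num_natCast, Int.toNat_natCast]
  -- arithmetic
  have hdiv : (n + 1) / q.den = n / d * (d / q.den) + m / q.den := by
    conv_lhs => rw [phi_decomp d n]
    rw [Nat.add_div_of_dvd_right (Dvd.dvd.mul_left hbd _), Nat.mul_div_assoc _ hbd]
  rw [hdiv, ← hq, hoval]
  ring

lemma phi_sub (d n : ℕ) (h : d ≤ n) : phi d (n - d + 1) = phi d (n + 1) := by
  simp only [phi, Nat.add_sub_cancel]
  rw [Nat.mod_eq_sub_mod h]

lemma fracO_eq_none {P : List ℚ} {m : ℕ} (h : fracO P m = none) : fracA' P m = none := by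
  rw [fracO, Option.map_eq_none_iff] at h
  rw [fracA', h, Option.map_none]

lemma SP_of_undef (P : List ℚ) : ∀ n, fracA' P (phi (fracD P) (n + 1)) = none → SP P n := by
  intro n
  induction n using Nat.strong_induction_on with
  | _ n ih =>
    intro hu
    by_cases h0 : n / fracD P = 0
    · exact SP.base n hu h0
    · have hd := fracD_pos P
      have hle : fracD P ≤ n := Nat.le_of_lt_succ (by
        rcases Nat.lt_or_ge n (fracD P) with h | h
        · exact absurd (Nat.div_eq_of_lt h) h0
        · omega)
      refine SP.stepUndef n hu (Nat.pos_of_ne_zero h0) (ih (n - fracD P) (by omega) ?_)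
      rw [phi_sub _ _ hle]
      exact hu

lemma SP_of_halt (P : List ℚ) (hpos : ∀ q ∈ P, 0 < q) :
    ∀ i n, fracIter P i (n + 1) = none → SP P n := by
  intro i
  induction i with
  | zero => intro n h; simp [fracIter] at h
  | succ i ih =>
    intro n h
    rw [fracIter] at h
    cases hs : fracStep P (n + 1) with
    | none => exact SP_of_undef P n ((step_none_iff P n).1 hs)
    | some v =>
      rw [hs, Option.bind_some] at h
      cases hA : fracA' P (phi (fracD P) (n + 1)) with
      | none => rw [(step_none_iff P n).2 hA] at hs; exact absurd hs (by simp)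
      | some a =>
        cases hO : fracO P (phi (fracD P) (n + 1)) with
        | none => rw [fracO_eq_none hO] at hA; exact absurd hA (by simp)
        | some o =>
          obtain ⟨hstep, ho1⟩ := step_some P hpos n a o hA hO
          rw [hstep] at hs
          obtain rfl : v = n / fracD P * a + o := by injection hs with h'; exact h'.symm
          refine SP.stepDef n a o hA hO (ih _ ?_)
          rw [show n / fracD P * a + o - 1 + 1 = n / fracD P * a + o by omega]
          exact h

lemma halt_of_SP (P : List ℚ) (hpos : ∀ q ∈ P, 0 < q) :
    ∀ n, SP P n → ∃ i, fracIter P i (n + 1) = none := by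
  intro n h
  induction h with
  | base n hu h0 =>
    exact ⟨1, by simp [fracIter, (step_none_iff P n).2 hu]⟩
  | stepUndef n hu h0 ih ih2 =>
    exact ⟨1, by simp [fracIter, (step_none_iff P n).2 hu]⟩
  | stepDef n a o ha ho ih ih2 =>
    obtain ⟨i, hi⟩ := ih2
    obtain ⟨hstep, ho1⟩ := step_some P hpos n a o ha ho
    refine ⟨i + 1, ?_⟩
    rw [fracIter, hstep, Option.bind_some,
      show n / fracD P * a + o = n / fracD P * a + o - 1 + 1 by omega]
    exact hi

/-- Lemma `lem:red:fractran:specs`: the stream specification induced by `P` is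
productive (produces at every position) iff `P` halts on every positive integer. -/
theorem fractran_spec_productive_iff_halting (P : List ℚ) (hpos : ∀ q ∈ P, 0 < q) :
    (∀ n : ℕ, SP P n) ↔ (∀ n : ℕ, 0 < n → ∃ i, fracIter P i n = none) := by
  constructor
  · intro h n hn
    obtain ⟨k, rfl⟩ := Nat.exists_eq_add_of_lt hn
    rw [Nat.zero_add]
    exact halt_of_SP P hpos k (h k)
  · intro h n
    obtain ⟨i, hi⟩ := h (n + 1) (Nat.succ_pos n)
    exact SP_of_halt P hpos i n hi
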